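/- Let A be a Schur ring over an abelian group G, m an integer coprime to |G|, and X a basic set of A. Then X^(m) = {x^m : x ∈ X} is also a basic set of A. -/

import Mathlib

open scoped Pointwise

noncomputable def clsum {G : Type*} [Group G] [Fintype G] (s : Set G) :
    MonoidAlgebra ℤ G :=
  ∑ x ∈ s.toFinite.toFinset, MonoidAlgebra.of ℤ G x

structure SchurRing (G : Type*) [Group G] [Fintype G] where
  P : Set (Set G)
  one_mem : ({(1 : G)} : Set G) ∈ P
  nonempty_cls : ∀ X ∈ P, X.Nonempty
  cover : ∀ g : G, ∃ X ∈ P, g ∈ X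
  disj : ∀ X ∈ P, ∀ Y ∈ P, X ≠ Y → Disjoint X Y
  inv_mem : ∀ X ∈ P, X⁻¹ ∈ P
  mul_closed : ∀ X ∈ P, ∀ Y ∈ P,
    clsum X * clsum Y ∈ Submodule.span ℤ (clsum '' P)

def SchurRing.isASet {G : Type*} [Group G] [Fintype G] (A : SchurRing G) (X : Set G) : Prop :=
  clsum X ∈ Submodule.span ℤ (clsum '' A.P)

open Classical in
lemma clsum_apply {G : Type*} [Group G] [Fintype G] (s : Set G) (g : G) :
    (clsum s).coeff g = if g ∈ s then 1 else 0 := by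
  unfold clsum
  rw [MonoidAlgebra.coeff_sum, Finset.sum_apply']
  simp only [MonoidAlgebra.of_apply, MonoidAlgebra.coeff_single, Finsupp.single_apply]
  rw [Finset.sum_ite_eq' _ g (fun _ => (1:ℤ))]
  simp [Set.Finite.mem_toFinset]

section SR
variable {G : Type*} [Group G] [Fintype G] (A : SchurRing G)

/-- coefficients of elements of the span are constant on basic sets -/
lemma const_on {f : MonoidAlgebra ℤ G} (hf : f ∈ Submodule.span ℤ (clsum '' A.P))
    {T : Set G} (hT : T ∈ A.P) {g h : G} (hg : g ∈ T) (hh : h ∈ T) : f.coeff g = f.coeff h := by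
  induction hf using Submodule.span_induction with
  | mem x hx =>
    obtain ⟨Y, hY, rfl⟩ := hx
    rw [clsum_apply, clsum_apply]
    by_cases hYT : Y = T
    · subst hYT; simp [hg, hh]
    · have hd := A.disj Y hY T hT hYT
      have h1 : g ∉ Y := fun hgY => (Set.disjoint_left.mp hd hgY) hg
      have h2 : h ∉ Y := fun hhY => (Set.disjoint_left.mp hd hhY) hh
      simp [h1, h2]
  | zero => simp
  | add x y _ _ hx hy =>
    show (x + y).coeff g = (x + y).coeff h
    rw [MonoidAlgebra.coeff_add, Finsupp.add_apply, Finsupp.add_apply, hx, hy]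
  | smul c x _ hx =>
    show (c • x).coeff g = (c • x).coeff h
    rw [MonoidAlgebra.coeff_smul, Finsupp.smul_apply, Finsupp.smul_apply, hx]

lemma span_mul {a b : MonoidAlgebra ℤ G} (ha : a ∈ Submodule.span ℤ (clsum '' A.P))
    (hb : b ∈ Submodule.span ℤ (clsum '' A.P)) :
    a * b ∈ Submodule.span ℤ (clsum '' A.P) := by
  induction ha using Submodule.span_induction with
  | mem x hx =>
    obtain ⟨Y, hY, rfl⟩ := hx
    induction hb using Submodule.span_induction with
    | mem y hy =>
      obtain ⟨Z, hZ, rfl⟩ := hy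
      exact A.mul_closed Y hY Z hZ
    | zero => simp
    | add u v _ _ hu hv => rw [mul_add]; exact Submodule.add_mem _ hu hv
    | smul c u _ hu => rw [mul_smul_comm]; exact Submodule.smul_mem _ c hu
  | zero => simp
  | add u v _ _ hu hv => rw [add_mul]; exact Submodule.add_mem _ hu hv
  | smul c u _ hu => rw [smul_mul_assoc]; exact Submodule.smul_mem _ c hu

lemma clsum_one : clsum ({1} : Set G) = 1 := by
  unfold clsum
  rw [show ({1} : Set G).toFinite.toFinset = {1} by ext; simp]
  simp [MonoidAlgebra.one_def]

lemma span_pow {X : Set G} (hX : X ∈ A.P) (k : ℕ) :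
    (clsum X) ^ k ∈ Submodule.span ℤ (clsum '' A.P) := by
  induction k with
  | zero =>
    rw [pow_zero, ← clsum_one]
    exact Submodule.subset_span ⟨{1}, A.one_mem, rfl⟩
  | succ n ih =>
    rw [pow_succ]
    exact span_mul A ih (Submodule.subset_span ⟨X, hX, rfl⟩)

end SR

section Frob
variable {G : Type*} [CommGroup G] [Fintype G]

noncomputable def phi (p : ℕ) [Fact p.Prime] (G : Type*) [CommGroup G] :
    MonoidAlgebra ℤ G →ₐ[ℤ] MonoidAlgebra (ZMod p) G :=
  MonoidAlgebra.lift ℤ _ G (MonoidAlgebra.of (ZMod p) G)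

omit [Fintype G] in
lemma phi_apply (p : ℕ) [Fact p.Prime] (f : MonoidAlgebra ℤ G) (g : G) :
    (phi p G f).coeff g = ((f.coeff g : ℤ) : ZMod p) := by
  induction f using MonoidAlgebra.induction_linear with
  | zero => simp
  | add u v hu hv =>
    rw [map_add]
    show (phi p G u + phi p G v).coeff g = _
    rw [MonoidAlgebra.coeff_add, Finsupp.add_apply, hu, hv]
    show _ = (((u + v).coeff g : ℤ) : ZMod p)
    rw [MonoidAlgebra.coeff_add, Finsupp.add_apply]
    push_cast
    ring
  | single b a =>
    have h1 : (MonoidAlgebra.single b a : MonoidAlgebra ℤ G) = a • MonoidAlgebra.of ℤ G b := by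
      rw [MonoidAlgebra.of_apply, MonoidAlgebra.smul_single, smul_eq_mul, mul_one]
    classical
    conv_lhs => rw [h1, map_smul]
    unfold phi
    rw [MonoidAlgebra.lift_of]
    show (a • MonoidAlgebra.of (ZMod p) G b).coeff g = _
    rw [MonoidAlgebra.of_apply, MonoidAlgebra.smul_single]
    rw [MonoidAlgebra.coeff_single, MonoidAlgebra.coeff_single, Finsupp.single_apply, Finsupp.single_apply]
    split
    · rw [zsmul_one]
    · simp

omit [Fintype G] in
lemma phi_clsum (p : ℕ) [Fact p.Prime] [Fintype G] (s : Set G) :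
    phi p G (clsum s) = ∑ x ∈ s.toFinite.toFinset, MonoidAlgebra.of (ZMod p) G x := by
  unfold clsum
  rw [map_sum]
  refine Finset.sum_congr rfl fun x _ => ?_
  exact MonoidAlgebra.lift_of (MonoidAlgebra.of (ZMod p) G) x

lemma pow_p_injective (p : ℕ) (hp : Nat.Coprime p (Fintype.card G)) :
    Function.Injective (fun x : G => x ^ p) := by
  have h : (Nat.card G).Coprime p := by rw [Nat.card_eq_fintype_card]; exact hp.symm
  intro a b hab
  exact (powCoprime h).injective (by simpa [powCoprime_apply] using hab)

lemma frob_dvd (p : ℕ) [Fact p.Prime] (hp : Nat.Coprime p (Fintype.card G)) (X : Set G) (g : G) :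
    (p:ℤ) ∣ ((clsum X ^ p).coeff g - (clsum ((fun x => x ^ p) '' X)).coeff g) := by
  classical
  have inj := pow_p_injective (G := G) p hp
  haveI : CharP (MonoidAlgebra (ZMod p) G) p := by
    refine charP_of_injective_ringHom (f := MonoidAlgebra.singleOneRingHom) ?_ p
    intro a b h
    exact MonoidAlgebra.single_right_inj.mp h
  have hfin : ((fun x => x ^ p) '' X).toFinite.toFinset
      = X.toFinite.toFinset.image (fun x => x ^ p) := by
    ext y
    simp only [Set.Finite.mem_toFinset, Finset.mem_image, Set.mem_image]
  have key : phi p G (clsum X ^ p) = phi p G (clsum ((fun x => x ^ p) '' X)) := by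
    rw [map_pow, phi_clsum, phi_clsum, sum_pow_char, hfin,
      Finset.sum_image (fun a _ b _ h => inj h)]
    refine Finset.sum_congr rfl fun x _ => ?_
    exact (map_pow (MonoidAlgebra.of (ZMod p) G) x p).symm
  have h0 : phi p G (clsum X ^ p - clsum ((fun x => x ^ p) '' X)) = 0 := by
    rw [map_sub, key, sub_self]
  have h1 : (((clsum X ^ p - clsum ((fun x => x ^ p) '' X)).coeff g : ℤ) : ZMod p) = 0 := by
    rw [← phi_apply p, h0]; rfl
  rw [MonoidAlgebra.coeff_sub, Finsupp.sub_apply] at h1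
  exact (ZMod.intCast_zmod_eq_zero_iff_dvd _ p).mp h1

end Frob

section UB
variable {G : Type*} [CommGroup G] [Fintype G]

/-- auxiliary: "`X^(k)` is a union of basic sets" predicate -/
def UB (A : SchurRing G) (k : ℕ) : Prop :=
  ∀ X ∈ A.P, ∀ T ∈ A.P,
    (T ∩ (fun x : G => x ^ k) '' X).Nonempty → T ⊆ (fun x : G => x ^ k) '' X

lemma ub_prime (A : SchurRing G) (p : ℕ) [Fact p.Prime]
    (hp : Nat.Coprime p (Fintype.card G)) : UB A p := by
  intro X hX T hT hne
  obtain ⟨g0, hg0T, hg0X⟩ := hne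
  intro h hhT
  have hF : clsum X ^ p ∈ Submodule.span ℤ (clsum '' A.P) := span_pow A hX p
  have hc : (clsum X ^ p).coeff h = (clsum X ^ p).coeff g0 := const_on A hF hT hhT hg0T
  have d1 := frob_dvd p hp X g0
  have d2 := frob_dvd p hp X h
  rw [hc] at d2
  have d3 : (p:ℤ) ∣ (clsum ((fun x : G => x ^ p) '' X)).coeff g0
      - (clsum ((fun x : G => x ^ p) '' X)).coeff h := by
    have := dvd_sub d2 d1
    have e : (clsum X ^ p).coeff g0 - (clsum ((fun x : G => x ^ p) '' X)).coeff h
        - ((clsum X ^ p).coeff g0 - (clsum ((fun x : G => x ^ p) '' X)).coeff g0)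
        = (clsum ((fun x : G => x ^ p) '' X)).coeff g0 - (clsum ((fun x : G => x ^ p) '' X)).coeff h := by
      ring
    rwa [e] at this
  by_contra hnot
  rw [clsum_apply, clsum_apply] at d3
  simp only [hg0X, if_pos, hnot, if_neg, not_false_iff, sub_zero, if_true] at d3
  have hle : (p:ℤ) ≤ 1 := Int.le_of_dvd one_pos (by simpa using d3)
  have h2 : 2 ≤ p := (Fact.out : p.Prime).two_le
  omega

lemma ub_one (A : SchurRing G) : UB A 1 := by
  intro X hX T hT hne
  have him : (fun x : G => x ^ 1) '' X = X := by simp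
  rw [him] at hne ⊢
  by_cases h : T = X
  · subst h; exact fun t ht => ht
  · obtain ⟨g, hgT, hgX⟩ := hne
    exact absurd hgX (Set.disjoint_left.mp (A.disj T hT X hX h) hgT)

lemma ub_comp (A : SchurRing G) {a b : ℕ} (ha : UB A a) (hb : UB A b) : UB A (a * b) := by
  intro X hX T hT hne
  obtain ⟨g, hgT, x, hxX, rfl⟩ := hne
  obtain ⟨Y, hY, hxaY⟩ := A.cover (x ^ a)
  have hY1 : Y ⊆ (fun x : G => x ^ a) '' X := ha X hX Y hY ⟨x ^ a, hxaY, ⟨x, hxX, rfl⟩⟩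
  have h2 : T ⊆ (fun x : G => x ^ b) '' Y :=
    hb Y hY T hT ⟨x ^ (a * b), hgT, ⟨x ^ a, hxaY, (pow_mul x a b).symm⟩⟩
  intro t ht
  obtain ⟨y, hyY, rfl⟩ := h2 ht
  obtain ⟨z, hzX, rfl⟩ := hY1 hyY
  exact ⟨z, hzX, pow_mul z a b⟩

lemma ub_all (A : SchurRing G) :
    ∀ k : ℕ, Nat.Coprime k (Fintype.card G) → 1 ≤ k → UB A k := by
  intro k
  induction k using Nat.strong_induction_on with
  | _ k ih =>
    intro hk hk1
    rcases eq_or_lt_of_le hk1 with h1 | h2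
    · rw [← h1]; exact ub_one A
    · have hp : k.minFac.Prime := Nat.minFac_prime (by omega)
      haveI : Fact k.minFac.Prime := ⟨hp⟩
      have hd : k.minFac ∣ k := Nat.minFac_dvd k
      have hcop_p : Nat.Coprime k.minFac (Fintype.card G) := Nat.Coprime.coprime_dvd_left hd hk
      have hq : k = k.minFac * (k / k.minFac) := (Nat.mul_div_cancel' hd).symm
      have hqlt : k / k.minFac < k := Nat.div_lt_self (by omega) hp.one_lt
      have hq1 : 1 ≤ k / k.minFac :=
        (Nat.one_le_div_iff hp.pos).mpr (Nat.minFac_le (by omega))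
      have hcop_q : Nat.Coprime (k / k.minFac) (Fintype.card G) :=
        Nat.Coprime.coprime_dvd_left (Nat.div_dvd_of_dvd hd) hk
      have hres := ub_comp A (ub_prime A k.minFac hcop_p) (ih _ hqlt hcop_q hq1)
      rwa [← hq] at hres

end UB

/-- Schur's first multiplier theorem. -/
theorem stmt7 {G : Type*} [CommGroup G] [Fintype G] (A : SchurRing G) (m : ℤ)
    (hm : Int.gcd m (Fintype.card G) = 1) (X : Set G) (hX : X ∈ A.P) :
    (fun x => x ^ m) '' X ∈ A.P := by
  classical
  by_cases hcard : Fintype.card G ≤ 1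
  · haveI : Subsingleton G := Fintype.card_le_one_iff_subsingleton.mp hcard
    have himg : (fun x : G => x ^ m) '' X = X := by
      ext y
      constructor
      · rintro ⟨x, hx, rfl⟩
        show x ^ m ∈ X
        rwa [Subsingleton.elim (x ^ m) x]
      · intro hy
        exact ⟨y, hy, Subsingleton.elim _ _⟩
    rw [himg]; exact hX
  · push_neg at hcard
    set n := Fintype.card G with hn
    set k : ℕ := (m % (n:ℤ)).toNat with hkdef
    have hn0 : (0:ℤ) < n := by exact_mod_cast Nat.lt_of_lt_of_le Nat.zero_lt_one hcard.le
    have hknn : ((k:ℤ)) = m % (n:ℤ) := Int.toNat_of_nonneg (Int.emod_nonneg m (by omega))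
    have hmk : ∀ x : G, x ^ m = x ^ k := by
      intro x
      rw [← zpow_natCast, hknn]
      have := zpow_mod_natCard x m
      rw [Nat.card_eq_fintype_card] at this
      exact this.symm
    have himg : (fun x : G => x ^ m) '' X = (fun x : G => x ^ k) '' X :=
      Set.image_congr fun x _ => hmk x
    rw [himg]
    -- coprimality of k and n
    have hmkz : m = (k:ℤ) + (n:ℤ) * (m / n) := by rw [hknn]; rw [Int.emod_def]; ring
    have hkcop : Nat.Coprime k n := by
      have hd : ∀ d : ℕ, d ∣ k → d ∣ n → d ∣ 1 := by
        intro d h1 h2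
        have hz1 : (d:ℤ) ∣ (k:ℤ) := Int.natCast_dvd_natCast.mpr h1
        have hz2 : (d:ℤ) ∣ (n:ℤ) := Int.natCast_dvd_natCast.mpr h2
        have hzm : (d:ℤ) ∣ m := by
          rw [hmkz]; exact dvd_add hz1 (Dvd.dvd.mul_right hz2 _)
        have : (d:ℤ) ∣ (Int.gcd m n : ℤ) := Int.dvd_coe_gcd hzm hz2
        rw [hm] at this
        exact_mod_cast this
      have := hd (Nat.gcd k n) (Nat.gcd_dvd_left _ _) (Nat.gcd_dvd_right _ _)
      exact Nat.dvd_one.mp this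
    have hk1 : 1 ≤ k := by
      rcases Nat.eq_zero_or_pos k with h0 | h0
      · rw [h0] at hkcop
        have := Nat.coprime_zero_left n |>.mp hkcop
        omega
      · exact h0
    obtain ⟨k', -, hkk'⟩ := Nat.exists_mul_mod_eq_one_of_coprime hkcop hcard
    have hx_kk' : ∀ x : G, (x ^ k) ^ k' = x := by
      intro x
      rw [← pow_mul, pow_eq_pow_mod (k * k') (pow_card_eq_one (G := G) (x := x)), hkk', pow_one]
    have hk'cop : Nat.Coprime k' n := by
      have h : Nat.gcd n (k * k') = 1 := by
        rw [Nat.gcd_rec, hkk']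
        exact Nat.gcd_one_left n
      have h2 : Nat.Coprime (k * k') n := Nat.coprime_comm.mp h
      exact Nat.Coprime.coprime_dvd_left (dvd_mul_left k' k) h2
    have hk'1 : 1 ≤ k' := by
      rcases Nat.eq_zero_or_pos k' with h0 | h0
      · rw [h0, Nat.mul_zero, Nat.zero_mod] at hkk'
        omega
      · exact h0
    have hUBk := ub_all A k hkcop hk1
    have hUBk' := ub_all A k' hk'cop hk'1
    obtain ⟨x0, hx0⟩ := A.nonempty_cls X hX
    obtain ⟨T, hT, hgT⟩ := A.cover (x0 ^ k)
    have hTsub : T ⊆ (fun x : G => x ^ k) '' X :=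
      hUBk X hX T hT ⟨x0 ^ k, hgT, ⟨x0, hx0, rfl⟩⟩
    have hTk'X : (fun x : G => x ^ k') '' T ⊆ X := by
      rintro y ⟨t, htT, rfl⟩
      obtain ⟨x, hxX, rfl⟩ := hTsub htT
      show (x ^ k) ^ k' ∈ X
      rw [hx_kk' x]; exact hxX
    have hXsub : X ⊆ (fun x : G => x ^ k') '' T :=
      hUBk' T hT X hX ⟨x0, hx0, ⟨x0 ^ k, hgT, hx_kk' x0⟩⟩
    have hXeq : X = (fun x : G => x ^ k') '' T := Set.Subset.antisymm hXsub hTk'X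
    have hfinal : (fun x : G => x ^ k) '' X = T := by
      rw [hXeq, Set.image_image]
      have hcongr : ∀ t ∈ T, (t ^ k') ^ k = t := by
        intro t _
        rw [← pow_mul, mul_comm, pow_mul]
        exact hx_kk' t
      calc (fun t : G => (t ^ k') ^ k) '' T = (fun t : G => t) '' T :=
            Set.image_congr hcongr
        _ = T := Set.image_id T
    rw [hfinal]
    exact hT
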